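/- Let ε > 0, β₂ < 0, and define Ω_ε ⊂ ℂ in polar coordinates z = ρe^{iθ} (θ ∈ [−π,π]) by: ρ ≤ ε if |θ| ≤ π/2, and ρ ≤ ε|sin θ| if |θ| ∈ (π/2, π]. If g_r ∈ Ω_ε ∖ {0} and g(t) is defined by 1/g(t) = 1/g_r − β₂t, then |g(t)| ≤ ε for all t ≥ 0. -/

import Mathlib

open Complex Real

set_option maxHeartbeats 1000000

/-- Uniform boundedness of the quadratic flow on the domain `Ω_ε`: if
`g_r ∈ Ω_ε ∖ {0}` (i.e. `|g_r| ≤ ε` when `|arg g_r| ≤ π/2`, and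
`|g_r| ≤ ε|sin(arg g_r)|` when `π/2 < |arg g_r| ≤ π`) and
`1/g(t) = 1/g_r − β₂t` with `β₂ < 0`, then `|g(t)| ≤ ε` for all `t ≥ 0`. -/
theorem quadratic_flow_uniform_bound
    (ε : ℝ) (hε : 0 < ε)
    (β₂ : ℝ) (hβ₂ : β₂ < 0)
    (gr : ℂ) (hgr0 : gr ≠ 0)
    (hΩ : (|Complex.arg gr| ≤ π / 2 → ‖gr‖ ≤ ε) ∧
          (π / 2 < |Complex.arg gr| → ‖gr‖ ≤ ε * |Real.sin (Complex.arg gr)|))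
    (t : ℝ) (ht : 0 ≤ t)
    (gt : ℂ) (hgt : gt ≠ 0)
    (hflow : gt⁻¹ = gr⁻¹ - (β₂ : ℂ) * t) :
    ‖gt‖ ≤ ε := by
  have hgrn : (0:ℝ) < ‖gr‖ := norm_pos_iff.mpr hgr0
  have hgtn : (0:ℝ) < ‖gt‖ := norm_pos_iff.mpr hgt
  obtain ⟨N, hN⟩ : ∃ N : ℝ, Complex.normSq gr = N := ⟨_, rfl⟩
  have hNpos : 0 < N := hN ▸ Complex.normSq_pos.mpr hgr0
  have hNeq : N = ‖gr‖ ^ 2 := by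
    rw [← hN, ← Complex.sq_norm]
  obtain ⟨a, ha⟩ : ∃ a : ℝ, (gr⁻¹).re = a := ⟨_, rfl⟩
  obtain ⟨b, hb⟩ : ∃ b : ℝ, (gr⁻¹).im = b := ⟨_, rfl⟩
  have haN : a * N = gr.re := by
    rw [← ha, Complex.inv_re, hN, div_mul_cancel₀ _ (ne_of_gt hNpos)]
  have hbN : b * N = -gr.im := by
    rw [← hb, Complex.inv_im, hN, div_mul_cancel₀ _ (ne_of_gt hNpos)]
  have hsum : gr.re ^ 2 + gr.im ^ 2 = N := by
    rw [← hN, Complex.normSq_apply]; ring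
  have habN : (a ^ 2 + b ^ 2) * N = 1 := by
    have h2 : ((a ^ 2 + b ^ 2) * N) * N = 1 * N := by
      linear_combination (a * N + gr.re) * haN + (b * N - gr.im) * hbN + hsum
    exact mul_right_cancel₀ (ne_of_gt hNpos) h2
  obtain ⟨s, hs⟩ : ∃ s : ℝ, -(β₂ * t) = s := ⟨_, rfl⟩
  have hs0 : 0 ≤ s := by nlinarith
  have hre : (gt⁻¹).re = a + s := by
    rw [hflow, Complex.sub_re, Complex.mul_re]
    simp [ha, ← hs]
    ring
  have him : (gt⁻¹).im = b := by
    rw [hflow, Complex.sub_im, Complex.mul_im]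
    simp [hb]
  have hwnorm : ‖gt⁻¹‖ ^ 2 = (a + s) ^ 2 + b ^ 2 := by
    rw [Complex.sq_norm, Complex.normSq_apply, hre, him]
    ring
  -- key inequality: 1 ≤ ε^2 * ‖gt⁻¹‖^2
  have hkey : 1 ≤ ε ^ 2 * ((a + s) ^ 2 + b ^ 2) := by
    rcases le_or_gt |Complex.arg gr| (π / 2) with hc | hc
    · -- case |arg| ≤ π/2 : re gr ≥ 0 and ‖gr‖ ≤ ε
      have h1 : ‖gr‖ ≤ ε := hΩ.1 hc
      have h2 : 0 ≤ gr.re := Complex.abs_arg_le_pi_div_two_iff.mp hc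
      have ha0 : 0 ≤ a := by nlinarith
      have hN2 : N ≤ ε ^ 2 := by nlinarith
      nlinarith [mul_nonneg (sq_nonneg ε) (mul_nonneg ha0 hs0),
        mul_nonneg (sq_nonneg ε) (sq_nonneg s),
        mul_nonneg (sub_nonneg.mpr hN2) (add_nonneg (sq_nonneg a) (sq_nonneg b)),
        habN]
    · -- case |arg| > π/2 : ‖gr‖ ≤ ε |sin (arg gr)|
      have h1 : ‖gr‖ ≤ ε * |Real.sin (Complex.arg gr)| := hΩ.2 hc
      have hsin : Real.sin (Complex.arg gr) = gr.im / ‖gr‖ := by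
        rw [Complex.sin_arg]
      have h3 : |Real.sin (Complex.arg gr)| * ‖gr‖ = |gr.im| := by
        rw [hsin, abs_div, abs_of_pos hgrn, div_mul_cancel₀ _ (ne_of_gt hgrn)]
      have h2 : N ≤ ε * |gr.im| := by
        have h6 : ‖gr‖ * ‖gr‖ ≤ ε * |Real.sin (Complex.arg gr)| * ‖gr‖ :=
          mul_le_mul_of_nonneg_right h1 (le_of_lt hgrn)
        rw [mul_assoc, h3] at h6
        nlinarith [hNeq]
      have hbabs : |b| * N = |gr.im| := by
        have h5 : |b * N| = |(-gr.im)| := by rw [hbN]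
        rwa [abs_mul, abs_of_pos hNpos, abs_neg] at h5
      have h4 : 1 ≤ ε * |b| := by
        have h5 : 1 * N ≤ (ε * |b|) * N := by nlinarith
        exact le_of_mul_le_mul_right h5 hNpos
      nlinarith [sq_nonneg (a + s), _root_.sq_abs b, abs_nonneg b, mul_nonneg (le_of_lt hε) (abs_nonneg b)]
  -- conclude
  have hni : ‖gt⁻¹‖ = ‖gt‖⁻¹ := norm_inv gt
  have hkey2 : 1 ≤ ε ^ 2 * (‖gt‖⁻¹) ^ 2 := by
    rw [← hni, hwnorm]; exact hkey
  have hinv : 0 < ‖gt‖⁻¹ := inv_pos.mpr hgtn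
  have hmul : ‖gt‖ * ‖gt‖⁻¹ = 1 := mul_inv_cancel₀ (ne_of_gt hgtn)
  have h7 : 1 ≤ ε * ‖gt‖⁻¹ := by
    nlinarith [hkey2, mul_pos hε hinv]
  have h8 : 1 * ‖gt‖ ≤ (ε * ‖gt‖⁻¹) * ‖gt‖ := mul_le_mul_of_nonneg_right h7 hgtn.le
  nlinarith [h8, hmul]
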